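/- arXiv:2511.12970 — 2 statements merged into one kernel-verified Lean document; each statement's English description precedes it below -/
import Mathlib

section
/- Let p, q ∈ (1,∞), α, β ∈ (−1,∞), a, b ∈ ℝ with α + 1 < p(b+1). Set λ = (n+β)/q − (n+α)/p, c = n + a + b + λ, and τ = c − a − b + α. Then τ = (n+α)/p' + (n+β)/q > 0, and there exist real numbers r < 0 with −(1+β)/q < r and s ∈ ℝ such that −(1+α)/p' − (b−α)γ < s < (b−α)δ, where γ = ((n+α)/p' + s − r)/τ and δ = ((n+β)/q + r − s)/τ; moreover γ + δ = 1. -/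
theorem stmt9 (n : ℕ) (hn : 0 < n) (p q α β a b : ℝ)
    (hp : 1 < p) (hq : 1 < q) (hα : -1 < α) (hβ : -1 < β)
    (hab : α + 1 < p * (b + 1)) :
    ∀ p' lam c τ : ℝ, p' = p / (p - 1) →
      lam = ((n : ℝ) + β) / q - ((n : ℝ) + α) / p →
      c = (n : ℝ) + a + b + lam → τ = c - a - b + α →
      τ = ((n : ℝ) + α) / p' + ((n : ℝ) + β) / q ∧ 0 < τ ∧
      ∃ r s : ℝ, r < 0 ∧ -(1 + β) / q < r ∧
        ∀ γ δ : ℝ, γ = (((n : ℝ) + α) / p' + s - r) / τ →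
          δ = (((n : ℝ) + β) / q + r - s) / τ →
          (-(1 + α) / p' - (b - α) * γ < s ∧ s < (b - α) * δ ∧ γ + δ = 1) := by
  intro p' lam c τ hp' hlam hc hτ
  have hp0 : (0:ℝ) < p := by linarith
  have hq0 : (0:ℝ) < q := by linarith
  have hp1 : (0:ℝ) < p - 1 := by linarith
  have hn1 : (1:ℝ) ≤ (n:ℝ) := by exact_mod_cast hn
  have hnα : (0:ℝ) < (n:ℝ) + α := by linarith
  have hnβ : (0:ℝ) < (n:ℝ) + β := by linarith
  subst hp' hlam hc hτ
  have hXval : ((n:ℝ) + α) / (p / (p-1)) = ((n:ℝ) + α) * (p - 1) / p := by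
    rw [div_div_eq_mul_div]
  set X : ℝ := ((n:ℝ) + α) / (p / (p-1)) with hX
  set Y : ℝ := ((n:ℝ) + β) / q with hY
  clear_value X Y
  have hX0 : 0 < X := by rw [hXval]; positivity
  have hY0 : 0 < Y := by rw [hY]; positivity
  have hτ0 : 0 < X + Y := by linarith
  have hτeq : (n:ℝ) + a + b + (Y - ((n:ℝ)+α)/p) - a - b + α = X + Y := by
    rw [hXval, hY]; field_simp; ring
  rw [hτeq]
  refine ⟨rfl, hτ0, ?_⟩
  set P : ℝ := (1 + α) * (p - 1) / p with hP
  clear_value P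
  have hPval : (-(1:ℝ) - α) / (p / (p-1)) = -P := by
    rw [div_div_eq_mul_div, hP]; ring
  have hE : 0 < P + (b - α) := by
    rw [hP, div_add' _ _ _ (ne_of_gt hp0)]
    apply div_pos _ hp0
    nlinarith
  have hXP : P ≤ X := by
    rw [hXval, hP]
    gcongr <;> linarith
  set r : ℝ := -(1 + β) / (2 * q) with hr
  clear_value r
  have hr0 : r < 0 := by
    rw [hr]; apply div_neg_of_neg_of_pos
    · linarith
    · positivity
  have hrβ : -(1 + β) / q < r := by
    rw [hr, div_lt_div_iff₀ hq0 (by positivity)]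
    nlinarith
  set K : ℝ := X + Y + (b - α) with hK
  clear_value K
  have hK0 : 0 < K := by rw [hK]; nlinarith
  set A : ℝ := -P * (X + Y) - (b - α) * (X - r) with hA
  set B : ℝ := (b - α) * (Y + r) with hB
  clear_value A B
  have hAB : A < B := by
    rw [hA, hB]
    nlinarith [mul_pos hτ0 hE]
  refine ⟨r, (A + B) / (2 * K), hr0, hrβ, ?_⟩
  set s : ℝ := (A + B) / (2 * K) with hs
  clear_value s
  have hKne : K ≠ 0 := ne_of_gt hK0
  have hsKval : s * K = (A + B) / 2 := by
    rw [hs, div_mul_eq_mul_div, mul_comm (A + B) K, mul_comm (2:ℝ) K,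
      mul_div_mul_left _ _ hKne]
  have hsK1 : A < s * K := by rw [hsKval]; linarith
  have hsK2 : s * K < B := by rw [hsKval]; linarith
  have hsK1' : -P * (X + Y) - (b - α) * (X - r) < s * (X + Y) + s * (b - α) := by
    have := hsK1; rw [hK, hA] at this
    have he : s * (X + Y + (b - α)) = s * (X + Y) + s * (b - α) := by ring
    linarith [he ▸ this]
  have hsK2' : s * (X + Y) + s * (b - α) < (b - α) * (Y + r) := by
    have := hsK2; rw [hK, hB] at this
    have he : s * (X + Y + (b - α)) = s * (X + Y) + s * (b - α) := by ring
    linarith [he ▸ this]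
  intro γ δ hγ hδ
  subst hγ hδ
  refine ⟨?_, ?_, ?_⟩
  · have h1 : -(1 + α) / (p / (p-1)) = -P := by rw [← hPval]; ring_nf
    rw [h1, ← mul_div_assoc, sub_lt_comm, lt_div_iff₀ hτ0]
    have e1 : (-P - s) * (X + Y) = -P * (X + Y) - s * (X + Y) := by ring
    have e2 : (b - α) * (X + s - r) = (b - α) * (X - r) + s * (b - α) := by ring
    rw [e1, e2]; linarith
  · rw [← mul_div_assoc, lt_div_iff₀ hτ0]
    have e3 : (b - α) * (Y + r - s) = (b - α) * (Y + r) - s * (b - α) := by ring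
    rw [e3]; linarith
  · rw [← add_div]
    have h2 : X + s - r + (Y + r - s) = X + Y := by ring
    rw [h2, div_self (ne_of_gt hτ0)]
end

section
/- Let n ≥ 2 and z, u ∈ T_{Λₙ}, the tube over the forward light cone. Then 𝔤(Im u) ≤ |Q(z − conj(u))| and 𝔤(Im z) ≤ |Q(z − conj(u))|, i.e., the ratios 𝔤(Im u)/|Q(z−conj(u))| and 𝔤(Im z)/|Q(z−conj(u))| are bounded above by an absolute constant. -/
noncomputable section
open MeasureTheory Complex
open scoped ENNReal NNReal

def glc (n : ℕ) (y : Fin n → ℝ) : ℝ :=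
  2 * (∑ i, if i.val = n - 1 then (y i) ^ 2 else 0) - ∑ i, (y i) ^ 2

def lastC (n : ℕ) (y : Fin n → ℝ) : ℝ := ∑ i, if i.val = n - 1 then y i else 0

def cone (n : ℕ) : Set (Fin n → ℝ) := {y | 0 < lastC n y ∧ 0 < glc n y}

def imV {n : ℕ} (z : Fin n → ℂ) : Fin n → ℝ := fun i => (z i).im

def tube (n : ℕ) : Set (Fin n → ℂ) := {z | imV z ∈ cone n}

def Qlc (n : ℕ) (z : Fin n → ℂ) : ℂ :=
  (∑ i, (z i) ^ 2) - 2 * ∑ i, if i.val = n - 1 then (z i) ^ 2 else 0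

def conjV {n : ℕ} (z : Fin n → ℂ) : Fin n → ℂ := fun i => (starRingEnd ℂ) (z i)

def wMeasure (n : ℕ) (a : ℝ) : Measure (Fin n → ℂ) :=
  (volume.restrict (tube n)).withDensity fun z => ENNReal.ofReal (glc n (imV z) ^ a)

def lpNormE {X : Type*} [MeasurableSpace X] (p : ℝ≥0∞) (μ : Measure X) (g : X → ℝ≥0∞) : ℝ≥0∞ :=
  if p = ∞ then essSup g μ else (∫⁻ x, g x ^ p.toReal ∂μ) ^ (1 / p.toReal)

def mixedNormE (n : ℕ) (p1 p2 : ℝ≥0∞) (a1 a2 : ℝ)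
    (f : (Fin n → ℂ) → (Fin n → ℂ) → ℝ≥0∞) : ℝ≥0∞ :=
  lpNormE p2 (wMeasure n a2) fun w => lpNormE p1 (wMeasure n a1) fun z => f z w

def TopFR (n : ℕ) (a1 a2 b1 b2 c1 c2 : ℝ)
    (f : (Fin n → ℂ) → (Fin n → ℂ) → ℂ) (z w : Fin n → ℂ) : ℂ :=
  ((glc n (imV z) ^ a1 : ℝ) : ℂ) * ((glc n (imV w) ^ a2 : ℝ) : ℂ) *
    ∫ u in tube n, ∫ η in tube n,
      ((glc n (imV u) ^ b1 : ℝ) : ℂ) * ((glc n (imV η) ^ b2 : ℝ) : ℂ) * f u η /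
        (Qlc n (z - conjV u) ^ (c1 : ℂ) * Qlc n (w - conjV η) ^ (c2 : ℂ))

def SopFR (n : ℕ) (a1 a2 b1 b2 c1 c2 : ℝ)
    (f : (Fin n → ℂ) → (Fin n → ℂ) → ℂ) (z w : Fin n → ℂ) : ℂ :=
  ((glc n (imV z) ^ a1 : ℝ) : ℂ) * ((glc n (imV w) ^ a2 : ℝ) : ℂ) *
    ∫ u in tube n, ∫ η in tube n,
      ((glc n (imV u) ^ b1 : ℝ) : ℂ) * ((glc n (imV η) ^ b2 : ℝ) : ℂ) * f u η /
        (((‖Qlc n (z - conjV u)‖ ^ c1 : ℝ) : ℂ) *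
         ((‖Qlc n (w - conjV η)‖ ^ c2 : ℝ) : ℂ))

def BddOp (n : ℕ) (p1 p2 q1 q2 : ℝ≥0∞) (a1 a2 b1 b2 : ℝ)
    (T : ((Fin n → ℂ) → (Fin n → ℂ) → ℂ) → (Fin n → ℂ) → (Fin n → ℂ) → ℂ) : Prop :=
  ∃ C : ℝ≥0∞, C < ⊤ ∧ ∀ f,
    mixedNormE n q1 q2 b1 b2 (fun z w => (‖T f z w‖₊ : ℝ≥0∞)) ≤
      C * mixedNormE n p1 p2 a1 a2 fun z w => (‖f z w‖₊ : ℝ≥0∞)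

def iRv (n : ℕ) (r : ℝ) : Fin n → ℂ := fun i => if i.val = n - 1 then (r : ℂ) * Complex.I else 0

def fR (n : ℕ) (r l1 l2 s1 s2 : ℝ) (z w : Fin n → ℂ) : ℂ :=
  ((glc n (imV z) ^ l1 : ℝ) : ℂ) * ((glc n (imV w) ^ l2 : ℝ) : ℂ) /
    (Qlc n (z + iRv n r) ^ (s1 : ℂ) * Qlc n (w + iRv n r) ^ (s2 : ℂ))


section Aux
variable {n : ℕ}

private lemma sum_ite_last' {M : Type*} [AddCommMonoid M] (hn : 0 < n) (f : Fin n → M) :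
    (∑ i, if i.val = n-1 then f i else 0) = f ⟨n-1, Nat.sub_lt hn one_pos⟩ := by
  have h1 : ∀ i : Fin n, (if (i:ℕ) = n-1 then f i else 0)
      = (if i = (⟨n-1, Nat.sub_lt hn one_pos⟩ : Fin n) then f i else 0) := by
    intro i
    by_cases h : i = (⟨n-1, Nat.sub_lt hn one_pos⟩ : Fin n)
    · subst h; simp
    · rw [if_neg h, if_neg (by simpa [Fin.ext_iff] using h)]
  simp_rw [h1]
  simp [Finset.sum_ite_eq']

private lemma lastC_eq' (hn : 0 < n) (y : Fin n → ℝ) :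
    lastC n y = y ⟨n-1, Nat.sub_lt hn one_pos⟩ := sum_ite_last' hn y

private lemma glc_eq' (hn : 0 < n) (y : Fin n → ℝ) :
    glc n y = (y ⟨n-1, Nat.sub_lt hn one_pos⟩)^2
      - ∑ i ∈ Finset.univ.erase ⟨n-1, Nat.sub_lt hn one_pos⟩, (y i)^2 := by
  unfold glc
  rw [sum_ite_last' hn,
    ← Finset.sum_erase_add Finset.univ _ (Finset.mem_univ (⟨n-1, Nat.sub_lt hn one_pos⟩ : Fin n))]
  ring

private lemma Qlc_eq' (hn : 0 < n) (v : Fin n → ℂ) :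
    Qlc n v = (∑ i ∈ Finset.univ.erase ⟨n-1, Nat.sub_lt hn one_pos⟩, (v i)^2)
      - (v ⟨n-1, Nat.sub_lt hn one_pos⟩)^2 := by
  unfold Qlc
  rw [sum_ite_last' hn,
    ← Finset.sum_erase_add Finset.univ _ (Finset.mem_univ (⟨n-1, Nat.sub_lt hn one_pos⟩ : Fin n))]
  ring

private lemma Qlc_re' (hn : 0 < n) (v : Fin n → ℂ) :
    (Qlc n v).re = (∑ i ∈ Finset.univ.erase ⟨n-1, Nat.sub_lt hn one_pos⟩,
      ((v i).re^2 - (v i).im^2))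
      - ((v ⟨n-1, Nat.sub_lt hn one_pos⟩).re^2 - (v ⟨n-1, Nat.sub_lt hn one_pos⟩).im^2) := by
  rw [Qlc_eq' hn]
  simp only [Complex.sub_re, Complex.re_sum, sq, Complex.mul_re]

private lemma Qlc_im' (hn : 0 < n) (v : Fin n → ℂ) :
    (Qlc n v).im = 2 * ((∑ i ∈ Finset.univ.erase ⟨n-1, Nat.sub_lt hn one_pos⟩,
      (v i).re*(v i).im)
      - (v ⟨n-1, Nat.sub_lt hn one_pos⟩).re*(v ⟨n-1, Nat.sub_lt hn one_pos⟩).im) := by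
  rw [Qlc_eq' hn]
  simp only [Complex.sub_im, Complex.im_sum, sq, Complex.mul_im]
  rw [Finset.sum_congr rfl (fun i _ => show (v i).re*(v i).im + (v i).im*(v i).re
    = 2*((v i).re*(v i).im) from by ring)]
  rw [← Finset.mul_sum]
  ring

private lemma revCS' (p q Sa Sb C : ℝ) (hSa : 0 ≤ Sa) (hSb : 0 ≤ Sb) (hSa2 : Sa ≤ p^2)
    (hSb2 : Sb ≤ q^2) (hC : C^2 ≤ Sa*Sb) : (p^2 - Sa)*(q^2 - Sb) ≤ (p*q - C)^2 := by
  rcases eq_or_lt_of_le hSb with h | h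
  · have hC0 : C = 0 := by nlinarith [sq_nonneg C]
    subst hC0
    nlinarith [mul_nonneg hSa (sq_nonneg q)]
  · nlinarith [sq_nonneg (p*Sb - C*q), mul_nonneg (sub_nonneg.2 hC) (sub_nonneg.2 hSb2)]

private lemma key' (p q Sa Sb C : ℝ) (hSa : 0 ≤ Sa) (hSb : 0 ≤ Sb)
    (hG : Sb < q^2) (hC : C^2 ≤ Sa*Sb) :
    (q^2 - Sb)^2 ≤ (Sa - p^2 + (q^2 - Sb))^2 + 4*(p*q - C)^2 := by
  rcases le_or_gt (p^2) Sa with h | h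
  · nlinarith [sq_nonneg (p*q - C), sq_nonneg (Sa - p^2)]
  · have := revCS' p q Sa Sb C hSa hSb h.le hG.le hC
    nlinarith [mul_pos (sub_pos.2 h) (sub_pos.2 hG)]

private lemma innerle' (ym vm Sy Sv Cyv : ℝ) (h1 : 0 < ym) (h2 : 0 < vm)
    (hSy : 0 ≤ Sy) (hSv : 0 ≤ Sv) (h3 : Sy < ym^2) (h4 : Sv < vm^2)
    (hCS : Cyv^2 ≤ Sy*Sv) : Cyv ≤ ym*vm := by
  nlinarith [mul_pos h1 h2, sq_nonneg (Cyv - ym*vm), sq_nonneg (Cyv + ym*vm),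
    mul_nonneg hSy hSv, mul_pos (sub_pos.2 h3) (sub_pos.2 h4)]

end Aux

set_option maxHeartbeats 1000000

theorem stmt15 (n : ℕ) (hn : 2 ≤ n) :
    ∀ z ∈ tube n, ∀ u ∈ tube n,
      glc n (imV u) ≤ ‖Qlc n (z - conjV u)‖ ∧
      glc n (imV z) ≤ ‖Qlc n (z - conjV u)‖ := by
  intro z hz u hu
  have hn0 : 0 < n := by omega
  set m : Fin n := ⟨n-1, Nat.sub_lt hn0 one_pos⟩ with hm
  set E : Finset (Fin n) := Finset.univ.erase m with hE
  obtain ⟨hz1, hz2⟩ := hz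
  obtain ⟨hu1, hu2⟩ := hu
  rw [lastC_eq' hn0] at hz1 hu1
  rw [glc_eq' hn0] at hz2 hu2
  set ym := (z m).im
  set vm := (u m).im
  set Sy := ∑ i ∈ E, ((z i).im)^2 with hSydef
  set Sv := ∑ i ∈ E, ((u i).im)^2 with hSvdef
  simp only [imV] at hz1 hu1 hz2 hu2
  set a : Fin n → ℝ := fun i => (z i).re - (u i).re with ha
  set b : Fin n → ℝ := fun i => (z i).im + (u i).im with hb
  have hwre : ∀ i, ((z - conjV u) i).re = a i := by
    intro i; simp [conjV, a]
  have hwim : ∀ i, ((z - conjV u) i).im = b i := by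
    intro i; simp [conjV, b, sub_neg_eq_add]
  set Sa := ∑ i ∈ E, (a i)^2 with hSadef
  set Sb := ∑ i ∈ E, (b i)^2 with hSbdef
  set Cab := ∑ i ∈ E, a i * b i with hCabdef
  set Cyv := ∑ i ∈ E, (z i).im * (u i).im with hCyvdef
  have hSb_split : Sb = Sy + Sv + 2*Cyv := by
    rw [hSbdef, Finset.sum_congr rfl (fun i _ => show (b i)^2
      = ((z i).im)^2 + ((u i).im)^2 + 2*((z i).im * (u i).im) from by simp [b]; ring),
      Finset.sum_add_distrib, Finset.sum_add_distrib, ← Finset.mul_sum]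
  have hSynn : 0 ≤ Sy := Finset.sum_nonneg fun i _ => sq_nonneg _
  have hSvnn : 0 ≤ Sv := Finset.sum_nonneg fun i _ => sq_nonneg _
  have hSann : 0 ≤ Sa := Finset.sum_nonneg fun i _ => sq_nonneg _
  have hSbnn : 0 ≤ Sb := Finset.sum_nonneg fun i _ => sq_nonneg _
  have hSy : Sy < ym^2 := by linarith
  have hSv : Sv < vm^2 := by linarith
  have hCS2 : Cyv^2 ≤ Sy*Sv := by
    simpa [hCyvdef, hSydef, hSvdef] using
      Finset.sum_mul_sq_le_sq_mul_sq E (fun i => (z i).im) (fun i => (u i).im)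
  have hCS1 : Cab^2 ≤ Sa*Sb := by
    simpa [hCabdef, hSadef, hSbdef] using Finset.sum_mul_sq_le_sq_mul_sq E a b
  have hinner : Cyv ≤ ym*vm := innerle' ym vm Sy Sv Cyv hz1 hu1 hSynn hSvnn hSy hSv hCS2
  have hbm : b m = ym + vm := rfl
  have hq : 0 < b m := by rw [hbm]; positivity
  have hSb : Sb < (b m)^2 := by rw [hbm, hSb_split]; nlinarith
  set M := ‖Qlc n (z - conjV u)‖ with hM
  have hMnn : 0 ≤ M := norm_nonneg _
  have hre : (Qlc n (z - conjV u)).re = (Sa - (a m)^2 + ((b m)^2 - Sb)) := by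
    rw [Qlc_re' hn0]
    simp only [hwre, hwim]
    rw [Finset.sum_sub_distrib]
    ring
  have him : (Qlc n (z - conjV u)).im = 2*(Cab - a m * b m) := by
    rw [Qlc_im' hn0]
    simp only [hwre, hwim]
    rfl
  have hM2 : M^2 = (Sa - (a m)^2 + ((b m)^2 - Sb))^2 + 4*(a m * b m - Cab)^2 := by
    rw [hM, Complex.sq_norm, Complex.normSq_apply, hre, him]
    ring
  have hkey : ((b m)^2 - Sb)^2 ≤ M^2 := by
    rw [hM2]
    exact key' (a m) (b m) Sa Sb Cab hSann hSbnn hSb hCS1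
  have hbM : (b m)^2 - Sb ≤ M := by nlinarith [sq_nonneg (M - ((b m)^2 - Sb))]
  constructor
  · rw [glc_eq' hn0]
    simp only [imV]
    have h9 : vm^2 - Sv ≤ (b m)^2 - Sb := by
      rw [hbm, hSb_split]; nlinarith
    exact le_trans h9 hbM
  · rw [glc_eq' hn0]
    simp only [imV]
    have h9 : ym^2 - Sy ≤ (b m)^2 - Sb := by
      rw [hbm, hSb_split]; nlinarith
    exact le_trans h9 hbM
end
end
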